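/- In any open game, if a position lacks an ordinal game value for White, then Black has a strategy from that position guaranteeing that White never wins (i.e., no position won for White is ever reached). -/
import Mathlib


open Ordinal

/-- A two-player perfect-information game with an open winning condition for
White: positions form a game tree, each position has a player to move and a
nonempty set of legal moves, and White wins a play iff some finite position
along it is declared won for White (openness). -/
structure Game where
  Pos : Type
  /-- `true` means White is to move. -/
  turn : Pos → Bool
  /-- The set of positions legally reachable in one move. -/
  moves : Pos → Set Pos
  /-- Every position admits a legal move (plays can always continue). -/
  moves_nonempty : ∀ p, (moves p).Nonempty
  /-- The position is already won for White. -/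
  won : Pos → Prop

namespace Game

variable (G : Game)

/-- A witness that White can force a win from `p`: the position is won, or
White to move has some move with a witness, or Black to move and all moves
have witnesses.  `Wins p` is inhabited exactly when `p` lies in the domain of
the least partial game valuation. -/
inductive Wins : G.Pos → Type
  | zero (p : G.Pos) (h : G.won p) : Wins p
  | white (p q : G.Pos) (hw : ¬ G.won p) (ht : G.turn p = true)
      (hq : q ∈ G.moves p) (w : Wins q) : Wins p
  | black (p : G.Pos) (hw : ¬ G.won p) (ht : G.turn p = false)
      (f : ∀ q ∈ G.moves p, Wins q) : Wins p

/-- The ordinal rank of a winning witness: `0` at won positions, successor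
through White's chosen move, supremum over all of Black's moves. -/
noncomputable def rank : {p : G.Pos} → G.Wins p → Ordinal
  | _, .zero _ _ => 0
  | _, .white _ _ _ _ _ w => rank w + 1
  | _, .black p _ _ f => ⨆ q : G.moves p, rank (f q.1 q.2)

/-- The least partial ordinal game valuation for White: `Value p α` holds iff
`α` is the minimal rank of a winning witness at `p`.  Equivalently, the value
is `0` at won positions, `β + 1` at White-to-move positions where `β` is least
among the values of the moves, and the supremum of the values of the moves at
Black-to-move positions (defined only when all moves are valued); positions
with no witness are left without a value. -/
def Value (p : G.Pos) (α : Ordinal) : Prop :=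
  (∃ w : G.Wins p, G.rank w = α) ∧ ∀ w : G.Wins p, α ≤ G.rank w

/-- A strategy is legal if it always selects a legal move. -/
def Legal (σ : G.Pos → G.Pos) : Prop :=
  ∀ x, σ x ∈ G.moves x

open Classical in
/-- One step of play consistent with White's strategy `σ`; play halts at won
positions. -/
def WStep (σ : G.Pos → G.Pos) (x y : G.Pos) : Prop :=
  if G.won x then y = x
  else y ∈ G.moves x ∧ (G.turn x = true → y = σ x)

open Classical in
/-- One step of play consistent with Black's strategy `τ`; play halts at won
positions. -/
def BStep (τ : G.Pos → G.Pos) (x y : G.Pos) : Prop :=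
  if G.won x then y = x
  else y ∈ G.moves x ∧ (G.turn x = false → y = τ x)

/-- A play from `p` consistent with White's strategy `σ`. -/
def WPlay (σ : G.Pos → G.Pos) (p : G.Pos) (f : ℕ → G.Pos) : Prop :=
  f 0 = p ∧ ∀ n, G.WStep σ (f n) (f (n + 1))

/-- A play from `p` consistent with Black's strategy `τ`. -/
def BPlay (τ : G.Pos → G.Pos) (p : G.Pos) (f : ℕ → G.Pos) : Prop :=
  f 0 = p ∧ ∀ n, G.BStep τ (f n) (f (n + 1))

/-- White has a winning strategy from `p`: every consistent play reaches a
position won for White. -/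
def WhiteWins (p : G.Pos) : Prop :=
  ∃ σ, G.Legal σ ∧ ∀ f : ℕ → G.Pos, G.WPlay σ p f → ∃ n, G.won (f n)

/-- Black has a strategy from `p` guaranteeing that no position won for White
is ever reached. -/
def BlackDraws (p : G.Pos) : Prop :=
  ∃ τ, G.Legal τ ∧ ∀ f : ℕ → G.Pos, G.BPlay τ p f → ∀ n, ¬ G.won (f n)

end Game

/-- If a position lacks an ordinal game value for White, then
Black has a strategy guaranteeing that White never wins. -/
theorem unvalued_implies_blackDraws (G : Game) (p : G.Pos)
    (h : ¬ ∃ α, G.Value p α) : G.BlackDraws p := by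
  classical
  -- A winning witness yields a value (the minimal rank).
  have hval : ∀ q : G.Pos, Nonempty (G.Wins q) → ∃ α, G.Value q α := by
    rintro q ⟨w⟩
    refine ⟨sInf (Set.range (G.rank (p := q))), ?_, ?_⟩
    · show sInf (Set.range (G.rank (p := q))) ∈ Set.range (G.rank (p := q))
      exact csInf_mem ⟨G.rank w, w, rfl⟩
    · intro w'
      exact csInf_le (OrderBot.bddBelow _) ⟨w', rfl⟩
  have hp : ¬ Nonempty (G.Wins p) := fun hn => h (hval p hn)
  -- Black's strategy: move to an unvalued position when possible.
  set τ : G.Pos → G.Pos := fun x =>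
    if hx : ∃ q, q ∈ G.moves x ∧ ¬ Nonempty (G.Wins q) then hx.choose
    else (G.moves_nonempty x).choose with hτ
  have hleg : G.Legal τ := by
    intro x
    by_cases hx : ∃ q, q ∈ G.moves x ∧ ¬ Nonempty (G.Wins q)
    · simp only [hτ, hx, dif_pos]; exact hx.choose_spec.1
    · simp only [hτ, hx, dif_neg, not_false_iff]
      exact (G.moves_nonempty x).choose_spec
  refine ⟨τ, hleg, ?_⟩
  intro f hf n
  have hwon : ∀ x, ¬ Nonempty (G.Wins x) → ¬ G.won x := by
    intro x hx hw; exact hx ⟨.zero x hw⟩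
  have key : ∀ m, ¬ Nonempty (G.Wins (f m)) := by
    intro m
    induction m with
    | zero => rw [hf.1]; exact hp
    | succ k ih =>
      have hstep := hf.2 k
      rw [Game.BStep, if_neg (hwon _ ih)] at hstep
      obtain ⟨hm, ht⟩ := hstep
      cases hturn : G.turn (f k) with
      | true =>
        intro hn
        exact ih ⟨.white _ _ (hwon _ ih) hturn hm hn.some⟩
      | false =>
        have hx : ∃ q, q ∈ G.moves (f k) ∧ ¬ Nonempty (G.Wins q) := by
          by_contra hc
          push_neg at hc
          exact ih ⟨.black _ (hwon _ ih) hturn fun q hq => ((hc q hq).some)⟩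
        rw [ht hturn, hτ]
        simp only [hx, dif_pos]
        exact hx.choose_spec.2
  exact hwon _ (key n)
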